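/- Let $t, r > 0$, $\alpha_0, c_1 > 0$, and for $n \in \mathbb{Z}$ and $\delta > 0$ let $z_\delta(n) = |a(n)|^2 + \alpha_0\delta^2(1+n^2)^r$ where $|a(n)|^2 \geq c_1^2 (1+n^2)^{-t}$. Then with $\eta = t/(2(t+r))$ and $\gamma = r/(2(t+r))$ one has, for all $n$ and $\delta > 0$, $\frac{\alpha_0\delta^2(1+n^2)^r}{z_\delta(n)} \leq c_1^{-2\gamma} (\alpha_0 \delta^2)^{1/2 - \eta} (1+n^2)^{r/2}$. -/

import Mathlib

/-- Pointwise Fourier-side interpolation estimate: with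
`z_δ(n) = |a(n)|² + α₀δ²(1+n²)^r` and `|a(n)|² ≥ c₁²(1+n²)^(-t)`, setting
`η = t/(2(t+r))` and `γ = r/(2(t+r))`, one has
`α₀δ²(1+n²)^r / z_δ(n) ≤ c₁^(-2γ) (α₀δ²)^(1/2-η) (1+n²)^(r/2)`. -/
theorem stmt_7 (t r : ℝ) (ht : 0 < t) (hr : 0 < r)
    (α₀ c₁ : ℝ) (hα₀ : 0 < α₀) (hc₁ : 0 < c₁)
    (a : ℤ → ℂ)
    (ha : ∀ n : ℤ, c₁ ^ 2 * (1 + (n : ℝ) ^ 2) ^ (-t) ≤ ‖a n‖ ^ 2) :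
    ∀ (n : ℤ) (δ : ℝ), 0 < δ →
      α₀ * δ ^ 2 * (1 + (n : ℝ) ^ 2) ^ r /
          (‖a n‖ ^ 2 + α₀ * δ ^ 2 * (1 + (n : ℝ) ^ 2) ^ r)
        ≤ c₁ ^ (-(2 * (r / (2 * (t + r))))) *
            (α₀ * δ ^ 2) ^ (1 / 2 - t / (2 * (t + r))) *
            (1 + (n : ℝ) ^ 2) ^ (r / 2) := by
  intro n δ hδ
  have htr : (0:ℝ) < t + r := by linarith
  set N : ℝ := 1 + (n : ℝ) ^ 2 with hNdef
  have hNpos : 0 < N := by positivity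
  set γ : ℝ := r / (2 * (t + r)) with hγdef
  have hγpos : 0 < γ := by positivity
  have hγ1 : γ ≤ 1 := by
    rw [hγdef, div_le_one (by linarith)]; linarith
  have hη : 1 / 2 - t / (2 * (t + r)) = γ := by
    rw [hγdef]; field_simp; ring
  set A : ℝ := α₀ * δ ^ 2 * N ^ r with hAdef
  have hApos : 0 < A := by positivity
  set a0 : ℝ := c₁ ^ 2 * N ^ (-t) with ha0def
  have ha0pos : 0 < a0 := by positivity
  set z : ℝ := ‖a n‖ ^ 2 + A with hzdef
  have hzA : A ≤ z := le_add_of_nonneg_left (sq_nonneg _)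
  have hza : a0 ≤ z := le_add_of_le_of_nonneg (ha n) hApos.le
  have hzpos : 0 < z := lt_of_lt_of_le hApos hzA
  have hden : 0 < a0 ^ γ * A ^ (1 - γ) := by positivity
  have key : a0 ^ γ * A ^ (1 - γ) ≤ z := by
    calc a0 ^ γ * A ^ (1 - γ) ≤ z ^ γ * z ^ (1 - γ) :=
          mul_le_mul (Real.rpow_le_rpow ha0pos.le hza hγpos.le)
            (Real.rpow_le_rpow hApos.le hzA (by linarith)) (by positivity) (by positivity)
      _ = z := by rw [← Real.rpow_add hzpos]; norm_num
  have step : A / z ≤ A / (a0 ^ γ * A ^ (1 - γ)) := by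
    gcongr
  have eq1 : A / (a0 ^ γ * A ^ (1 - γ)) = A ^ γ * a0 ^ (-γ) := by
    rw [div_eq_iff hden.ne']
    calc A = (A ^ γ * A ^ (1 - γ)) * (a0 ^ (-γ) * a0 ^ γ) := by
          rw [← Real.rpow_add hApos, ← Real.rpow_add ha0pos]; norm_num
      _ = A ^ γ * a0 ^ (-γ) * (a0 ^ γ * A ^ (1 - γ)) := by ring
  have hc2 : (c₁ ^ 2 * N ^ (-t)) ^ (-γ) = c₁ ^ (-(2 * γ)) * N ^ (t * γ) := by
    rw [Real.mul_rpow (by positivity) (by positivity), ← Real.rpow_natCast c₁ 2,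
      ← Real.rpow_mul hc₁.le, ← Real.rpow_mul hNpos.le]
    congr 1
    · congr 1; push_cast; ring
    · congr 1; ring
  have hA' : (α₀ * δ ^ 2 * N ^ r) ^ γ = (α₀ * δ ^ 2) ^ γ * N ^ (r * γ) := by
    rw [Real.mul_rpow (by positivity) (by positivity), ← Real.rpow_mul hNpos.le]
  have h3 : N ^ (r * γ) * N ^ (t * γ) = N ^ (r / 2) := by
    rw [← Real.rpow_add hNpos]
    congr 1
    rw [hγdef]; field_simp; ring
  have eq2 : A ^ γ * a0 ^ (-γ) =
      c₁ ^ (-(2 * γ)) * (α₀ * δ ^ 2) ^ γ * N ^ (r / 2) := by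
    rw [hAdef, ha0def, hA', hc2, ← h3]; ring
  rw [hη]
  calc A / z ≤ A / (a0 ^ γ * A ^ (1 - γ)) := step
    _ = c₁ ^ (-(2 * γ)) * (α₀ * δ ^ 2) ^ γ * N ^ (r / 2) := by rw [eq1, eq2]
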